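/- Let (Ω, 𝒜, ℙ) be a probability space, V a random variable with values in Θ ⊆ ℝ, T a real random variable, and ψ : Θ → ℝ measurable. Suppose the conditional second moment bound E[(T − ψ(θ))² | V = θ] ≥ ψ'(θ)²/J(θ) holds for ρ-almost every θ (ρ the law of V), where J : Θ → (0,∞). Then for ψ_*ρ-almost every a, E[(T − a)² | ψ(V) = a] ≥ E_ρ[ψ'²/J | ψ = a]. -/
import Mathlib

open MeasureTheory

/-- Conditioning the Cramér–Rao bound with respect to ψ(V): the conditional quadratic
risk given ψ(V) dominates the conditional expectation of ψ'²/J given ψ(V). -/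
theorem stmt8 {Ω : Type*} [MeasurableSpace Ω] (μ : Measure Ω) [IsProbabilityMeasure μ]
    (V T : Ω → ℝ) (hV : Measurable V) (hT : Measurable T)
    (ψ J : ℝ → ℝ) (hψ : Measurable ψ) (hJ : ∀ θ, 0 < J θ)
    (hint : Integrable (fun ω => (T ω - ψ (V ω)) ^ 2) μ)
    (hint2 : Integrable (fun ω => (deriv ψ (V ω)) ^ 2 / J (V ω)) μ)
    (hCR : ∀ᵐ ω ∂μ,
      (deriv ψ (V ω)) ^ 2 / J (V ω)
        ≤ (μ[(fun ω' => (T ω' - ψ (V ω')) ^ 2) |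
            MeasurableSpace.comap V Real.measurableSpace]) ω) :
    ∀ᵐ ω ∂μ,
      (μ[(fun ω' => (deriv ψ (V ω')) ^ 2 / J (V ω')) |
          MeasurableSpace.comap (fun ω' => ψ (V ω')) Real.measurableSpace]) ω
        ≤ (μ[(fun ω' => (T ω' - ψ (V ω')) ^ 2) |
            MeasurableSpace.comap (fun ω' => ψ (V ω')) Real.measurableSpace]) ω := by
  have h2 := hV.comap_le
  set m := MeasurableSpace.comap V Real.measurableSpace with hm
  set m' := MeasurableSpace.comap (fun ω' => ψ (V ω')) Real.measurableSpace with hm'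
  have h1 : m' ≤ m := by
    rw [hm', hm]
    have : (fun ω' => ψ (V ω')) = ψ ∘ V := rfl
    rw [this, ← MeasurableSpace.comap_comp]
    exact MeasurableSpace.comap_mono hψ.comap_le
  have hmono := condExp_mono (m := m') (μ := μ) hint2 integrable_condExp hCR
  have heq := condExp_condExp_of_le (μ := μ)
    (f := fun ω' => (T ω' - ψ (V ω')) ^ 2) h1 h2
  filter_upwards [hmono, heq] with ω h₁ h₂
  rw [← h₂]
  exact h₁
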